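/- Let S be a spanoid on [n]. (a) If (S₁,...,S_n) is a union set-representation of S by subsets of a finite universe U = S₁ ∪ ... ∪ S_n with |S_i| ≤ ℓ for all i (where ℓ ≥ 1), then |U|/ℓ ≤ LP^cover(S); in particular every code obtained from such a representation via the construction C(x)_i = (x_u)_{u ∈ S_i}, x ∈ {0,1}^U, has dimension at most LP^cover(S). (b) Moreover f-rank(S) ≥ LP^cover(S): there exists a finite alphabet Σ and a code C ⊆ Σ^n consistent with S of dimension exactly LP^cover(S). -/

import Mathlib

open scoped BigOperators

/-- A spanoid on ground set `X`: a set of inference rules `(A, i)`,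
read as "`A` spans `i`". -/
abbrev SpanoidOn (X : Type) : Type := Set (Set X × X)

/-- The span of `T`: the smallest superset `T'` of `T` such that whenever `(A, i)` is a
rule with `A ⊆ T'`, also `i ∈ T'`. -/
def sSpan {X : Type} (S : SpanoidOn X) (T : Set X) : Set X :=
  ⋂₀ {T' : Set X | T ⊆ T' ∧ ∀ p ∈ S, p.1 ⊆ T' → p.2 ∈ T'}

/-- The rank of a spanoid: the minimum size of a subset spanning the whole ground set. -/
noncomputable def sRank {X : Type} [Fintype X] (S : SpanoidOn X) : ℕ :=
  sInf {k : ℕ | ∃ T : Set X, T.ncard = k ∧ sSpan S T = Set.univ}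

/-- A set is closed if it equals its own span. -/
def sClosed {X : Type} (S : SpanoidOn X) (B : Set X) : Prop := sSpan S B = B

/-- A set is open if its complement is closed. -/
def sOpen {X : Type} (S : SpanoidOn X) (B : Set X) : Prop := sClosed S Bᶜ

/-- A code `C ⊆ K^X` is consistent with the spanoid `S` if for every rule `(A, i)` of `S`
there is a function `g` with `c i = g (c|_A)` for all codewords `c ∈ C`. -/
def sConsistent {X K : Type} (S : SpanoidOn X) (C : Set (X → K)) : Prop :=
  ∀ p ∈ S, ∃ g : (↥p.1 → K) → K, ∀ c ∈ C, c p.2 = g (fun a => c a.1)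

/-- The functional rank of a spanoid: the supremum of `log |C| / log |Σ|` over all finite
alphabets `Σ` (of size at least 2) and all codes `C ⊆ Σ^X` consistent with `S`. -/
noncomputable def sFrank {X : Type} (S : SpanoidOn X) : ℝ :=
  sSup {d : ℝ | ∃ m : ℕ, 2 ≤ m ∧ ∃ C : Set (X → Fin m),
    sConsistent S C ∧ d = Real.log (Nat.card C) / Real.log m}

/-- Feasibility for the entropy linear program of a spanoid. -/
def sEntFeasible {X : Type} (S : SpanoidOn X) (f : Set X → ℝ) : Prop :=
  f ∅ = 0 ∧ (∀ i : X, f {i} ≤ 1) ∧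
  (∀ A B : Set X, f (A ∪ B) + f (A ∩ B) ≤ f A + f B) ∧
  (∀ A B : Set X, A ⊆ B → f A ≤ f B) ∧
  (∀ A : Set X, ∀ i ∈ sSpan S A, f (A ∪ {i}) = f A)

/-- The optimum of the entropy linear program: maximize `f(X)` over feasible `f`. -/
noncomputable def sLPentropy {X : Type} (S : SpanoidOn X) : ℝ :=
  sSup {y : ℝ | ∃ f : Set X → ℝ, sEntFeasible S f ∧ y = f Set.univ}

/-- The optimum of the covering linear program: minimize `∑ i, x i` over `x ≥ 0` such that
`∑_{i ∈ B} x i ≥ 1` for every nonempty open set `B`. -/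
noncomputable def sLPcover {X : Type} [Fintype X] (S : SpanoidOn X) : ℝ :=
  sInf {y : ℝ | ∃ x : X → ℝ, (∀ i, 0 ≤ x i) ∧
    (∀ B : Set X, B.Nonempty → sOpen S B → 1 ≤ ∑ i, B.indicator x i) ∧
    y = ∑ i, x i}

/-- A spanoid on `[n]` is a `q`-LCS with error-tolerance `δ` if every `i` is spanned by at
least `δ n` pairwise disjoint `q`-element subsets. -/
def sIsLCS {n : ℕ} (q : ℕ) (δ : ℝ) (S : SpanoidOn (Fin n)) : Prop :=
  ∀ i : Fin n, ∃ M : Finset (Finset (Fin n)),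
    δ * n ≤ (M.card : ℝ) ∧
    (∀ A ∈ M, A.card = q) ∧
    ((M : Set (Finset (Fin n))).Pairwise fun A B => Disjoint A B) ∧
    ∀ A ∈ M, ((A : Set (Fin n)), i) ∈ S

section FarkasAux
open Finset

theorem sum_ite_mul {K : Type} [Fintype K] [DecidableEq K] (t : K) (u : ℚ) (g : K → ℚ) :
    ∑ k, (if k = t then u else 0) * g k = u * g t := by
  have h := Finset.sum_ite_eq' Finset.univ t (fun k => u * g k)
  simp only [Finset.mem_univ, if_true] at h
  rw [← h]
  exact Finset.sum_congr rfl (fun k _ => by split <;> simp)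

theorem farkas_fin : ∀ (n : ℕ) {K : Type} [Fintype K] (a : K → Fin n → ℚ) (c : K → ℚ),
    (∃ x : Fin n → ℚ, ∀ k, ∑ j, a k j * x j ≤ c k) ∨
    (∃ l : K → ℚ, (∀ k, 0 ≤ l k) ∧ (∀ j, ∑ k, l k * a k j = 0) ∧ ∑ k, l k * c k < 0) := by
  intro n
  induction n with
  | zero =>
    intro K _ a c
    by_cases h : ∀ k, 0 ≤ c k
    · exact Or.inl ⟨0, fun k => by simpa using h k⟩
    · push_neg at h
      obtain ⟨k0, hk0⟩ := h
      classical
      refine Or.inr ⟨fun k => if k = k0 then 1 else 0, fun k => by positivity, fun j => j.elim0, ?_⟩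
      rw [sum_ite_mul k0 1 c]
      linarith
  | succ n ih =>
    intro K _ a c
    classical
    set α : K → ℚ := fun k => a k (Fin.last n) with hαdef
    set a' : K → Fin n → ℚ := fun k j => a k j.castSucc with ha'def
    let Kp := {k : K // 0 < α k}
    let Km := {k : K // α k < 0}
    let K0 := {k : K // α k = 0}
    let w : K0 ⊕ (Kp × Km) → K → ℚ :=
      Sum.elim (fun k0 k => if k = k0.1 then 1 else 0)
        (fun pq k => (if k = pq.1.1 then -α pq.2.1 else 0) + (if k = pq.2.1 then α pq.1.1 else 0))
    have hw0 : ∀ k' k, 0 ≤ w k' k := by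
      rintro (k0 | ⟨p, q⟩) k
      · dsimp only [w, Sum.elim]; split <;> norm_num
      · have hp := p.2; have hq := q.2
        dsimp only [w, Sum.elim]
        have h1 : (0:ℚ) ≤ if k = p.1 then -α q.1 else 0 := by split <;> linarith
        have h2 : (0:ℚ) ≤ if k = q.1 then α p.1 else 0 := by split <;> linarith
        linarith
    have hwevalL : ∀ (k0 : K0) (g : K → ℚ), ∑ k, w (.inl k0) k * g k = g k0.1 := by
      intro k0 g
      dsimp only [w, Sum.elim]
      rw [sum_ite_mul k0.1 1 g]; ring
    have hwevalR : ∀ (p : Kp) (q : Km) (g : K → ℚ),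
        ∑ k, w (.inr (p, q)) k * g k = (-α q.1) * g p.1 + α p.1 * g q.1 := by
      intro p q g
      dsimp only [w, Sum.elim]
      simp only [add_mul, Finset.sum_add_distrib]
      rw [sum_ite_mul, sum_ite_mul]
    have hwα : ∀ k', ∑ k, w k' k * α k = 0 := by
      rintro (k0 | ⟨p, q⟩)
      · rw [hwevalL]; exact k0.2
      · rw [hwevalR]; ring
    let b : K0 ⊕ (Kp × Km) → Fin n → ℚ := fun k' j => ∑ k, w k' k * a' k j
    let d : K0 ⊕ (Kp × Km) → ℚ := fun k' => ∑ k, w k' k * c k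
    rcases ih b d with ⟨x', hx'⟩ | ⟨l', hl'0, hl'a, hl'c⟩
    · -- feasible case: extend x' with a value for the last variable
      set A : K → ℚ := fun k => ∑ j, a' k j * x' j with hAdef
      have hbsum : ∀ k', ∑ j, b k' j * x' j = ∑ k, w k' k * A k := by
        intro k'
        dsimp only [b]
        simp only [Finset.sum_mul, mul_assoc]
        rw [Finset.sum_comm]
        simp only [← Finset.mul_sum]
        rfl
      have hpair : ∀ (p : Kp) (q : Km), (c q.1 - A q.1)/α q.1 ≤ (c p.1 - A p.1)/α p.1 := by
        intro p q
        have h := hx' (.inr (p, q))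
        rw [hbsum] at h
        rw [hwevalR p q A] at h
        have hd : d (.inr (p, q)) = (-α q.1) * c p.1 + α p.1 * c q.1 := hwevalR p q c
        rw [hd] at h
        have hp := p.2; have hq := q.2
        rw [div_le_iff_of_neg hq, div_mul_eq_mul_div, div_le_iff₀ hp]
        nlinarith [h]
      -- choose the last coordinate
      set ub : Kp → ℚ := fun p => (c p.1 - A p.1) / α p.1 with hubdef
      set lb : Km → ℚ := fun q => (c q.1 - A q.1) / α q.1 with hlbdef
      have hKm : ∀ (q : Km), (Finset.univ : Finset Km).Nonempty := fun q => ⟨q, Finset.mem_univ q⟩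
      have hKp : ∀ (p : Kp), (Finset.univ : Finset Kp).Nonempty := fun p => ⟨p, Finset.mem_univ p⟩
      set xlast : ℚ := if hm : (Finset.univ : Finset Km).Nonempty then Finset.univ.sup' hm lb
        else (if hp : (Finset.univ : Finset Kp).Nonempty then Finset.univ.inf' hp ub else 0)
        with hxlast
      have hlb : ∀ q : Km, lb q ≤ xlast := by
        intro q
        rw [hxlast, dif_pos (hKm q)]
        exact Finset.le_sup' lb (Finset.mem_univ q)
      have hub : ∀ p : Kp, xlast ≤ ub p := by
        intro p
        rw [hxlast]
        by_cases hm : (Finset.univ : Finset Km).Nonempty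
        · rw [dif_pos hm]
          exact Finset.sup'_le hm lb fun q _ => hpair p q
        · rw [dif_neg hm, dif_pos (hKp p)]
          exact Finset.inf'_le ub (Finset.mem_univ p)
      refine Or.inl ⟨(Fin.snoc x' xlast : Fin (n+1) → ℚ), ?_⟩
      intro k
      have hsum : ∑ j, a k j * (Fin.snoc x' xlast : Fin (n+1) → ℚ) j = A k + α k * xlast := by
        rw [Fin.sum_univ_castSucc]
        simp only [Fin.snoc_castSucc, Fin.snoc_last]
        rfl
      rw [hsum]
      rcases lt_trichotomy (α k) 0 with hneg | hzero | hpos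
      · have h1 := hlb ⟨k, hneg⟩
        rw [hlbdef] at h1
        have h2 := (div_le_iff_of_neg hneg).mp h1
        linarith
      · have h := hx' (.inl ⟨k, hzero⟩)
        rw [hbsum, hwevalL ⟨k, hzero⟩ A] at h
        have hd : d (.inl ⟨k, hzero⟩) = c k := hwevalL ⟨k, hzero⟩ c
        rw [hd] at h
        rw [hzero]
        linarith
      · have h1 := hub ⟨k, hpos⟩
        rw [hubdef] at h1
        have h2 := (le_div_iff₀ hpos).mp h1
        linarith
    · -- infeasible case: combine the multipliers
      set l : K → ℚ := fun k => ∑ k', l' k' * w k' k with hldef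
      have hswap : ∀ g : K → ℚ, ∑ k, l k * g k = ∑ k', l' k' * ∑ k, w k' k * g k := by
        intro g
        simp only [hldef, Finset.sum_mul]
        rw [Finset.sum_comm]
        simp only [mul_assoc, ← Finset.mul_sum]
      refine Or.inr ⟨l, ?_, ?_, ?_⟩
      · intro k
        exact Finset.sum_nonneg fun k' _ => mul_nonneg (hl'0 k') (hw0 k' k)
      · intro j
        refine Fin.lastCases ?_ ?_ j
        · rw [show ∑ k, l k * a k (Fin.last n) = ∑ k, l k * α k from rfl, hswap α]
          simp only [hwα, mul_zero, Finset.sum_const_zero]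
        · intro j'
          have : ∀ k, a k (Fin.castSucc j') = a' k j' := fun k => rfl
          calc ∑ k, l k * a k (Fin.castSucc j') = ∑ k, l k * a' k j' := by
                exact Finset.sum_congr rfl fun k _ => by rw [this]
            _ = ∑ k', l' k' * ∑ k, w k' k * a' k j' := hswap _
            _ = ∑ k', l' k' * b k' j' := rfl
            _ = 0 := hl'a j'
      · calc ∑ k, l k * c k = ∑ k', l' k' * ∑ k, w k' k * c k := hswap c
          _ = ∑ k', l' k' * d k' := rfl
          _ < 0 := hl'c

theorem farkas {V K : Type} [Fintype V] [Fintype K] (a : K → V → ℚ) (c : K → ℚ) :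
    (∃ x : V → ℚ, ∀ k, ∑ v, a k v * x v ≤ c k) ∨
    (∃ l : K → ℚ, (∀ k, 0 ≤ l k) ∧ (∀ v, ∑ k, l k * a k v = 0) ∧ ∑ k, l k * c k < 0) := by
  classical
  set e := (Fintype.equivFin V).symm with he
  rcases farkas_fin (Fintype.card V) (fun k j => a k (e j)) c with ⟨x, hx⟩ | ⟨l, h0, ha, hc⟩
  · refine Or.inl ⟨fun v => x (e.symm v), fun k => ?_⟩
    calc ∑ v, a k v * x (e.symm v) = ∑ j, a k (e j) * x (e.symm (e j)) :=
          (Equiv.sum_comp e (fun v => a k v * x (e.symm v))).symm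
      _ = ∑ j, a k (e j) * x j := by simp
      _ ≤ c k := hx k
  · refine Or.inr ⟨l, h0, fun v => ?_, hc⟩
    have h := ha (e.symm v)
    simpa using h

theorem sum_ite_ind {I : Type} [Fintype I] (P : I → Prop) [DecidablePred P] (u : ℚ)
    (g : I → ℚ) : ∑ i, (if P i then u else 0) * g i = u * ∑ i, (if P i then g i else 0) := by
  rw [Finset.mul_sum]
  exact Finset.sum_congr rfl fun i _ => by split <;> ring

theorem sum_exchange {α : Type} [CommRing α] {I O : Type} [Fintype I] [Fintype O]
    (M : O → I → Prop) [∀ B i, Decidable (M B i)] (f : O → α) (g : I → α) :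
    ∑ B, f B * ∑ i, (if M B i then g i else 0) =
      ∑ i, g i * ∑ B, (if M B i then f B else 0) := by
  simp only [Finset.mul_sum]
  rw [Finset.sum_comm]
  exact Finset.sum_congr rfl fun i _ => Finset.sum_congr rfl fun B _ => by split <;> ring

theorem weak_duality {α : Type} [CommRing α] [LinearOrder α] [IsStrictOrderedRing α] {I O : Type} [Fintype I] [Fintype O]
    (M : O → I → Prop) [∀ B i, Decidable (M B i)] (x : I → α) (y : O → α)
    (hx0 : ∀ i, 0 ≤ x i) (hxB : ∀ B, 1 ≤ ∑ i, (if M B i then x i else 0))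
    (hy0 : ∀ B, 0 ≤ y B) (hyI : ∀ i, ∑ B, (if M B i then y B else 0) ≤ 1) :
    ∑ B, y B ≤ ∑ i, x i := by
  calc ∑ B, y B ≤ ∑ B, y B * ∑ i, (if M B i then x i else 0) :=
        Finset.sum_le_sum fun B _ => le_mul_of_one_le_right (hy0 B) (hxB B)
    _ = ∑ i, x i * ∑ B, (if M B i then y B else 0) := by
        simp only [Finset.mul_sum]
        rw [Finset.sum_comm]
        exact Finset.sum_congr rfl fun i _ => Finset.sum_congr rfl fun B _ => by split <;> ring
    _ ≤ ∑ i, x i * 1 := Finset.sum_le_sum fun i _ => mul_le_mul_of_nonneg_left (hyI i) (hx0 i)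
    _ = ∑ i, x i := by simp

theorem covering_duality {I O : Type} [Fintype I] [Fintype O] (M : O → I → Prop)
    [∀ B i, Decidable (M B i)] (hne : ∀ B, ∃ i, M B i) :
    ∃ (x : I → ℚ) (y : O → ℚ),
      (∀ i, 0 ≤ x i) ∧ (∀ B, 1 ≤ ∑ i, (if M B i then x i else 0)) ∧
      (∀ B, 0 ≤ y B) ∧ (∀ i, (∑ B, (if M B i then y B else 0)) ≤ 1) ∧
      ∑ i, x i = ∑ B, y B := by
  classical
  set a : (I ⊕ (O ⊕ (O ⊕ (I ⊕ Unit)))) → (I ⊕ O) → ℚ :=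
    Sum.elim (fun i0 => Sum.elim (fun i => if i = i0 then (-1:ℚ) else 0) (fun _ => 0))
      (Sum.elim (fun B0 => Sum.elim (fun i => if M B0 i then (-1:ℚ) else 0) (fun _ => 0))
        (Sum.elim (fun B0 => Sum.elim (fun _ => (0:ℚ)) (fun B => if B = B0 then (-1:ℚ) else 0))
          (Sum.elim (fun i0 => Sum.elim (fun _ => (0:ℚ)) (fun B => if M B i0 then 1 else 0))
            (fun _ => Sum.elim (fun _ => (1:ℚ)) (fun _ => (-1:ℚ)))))) with hadef
  set c : (I ⊕ (O ⊕ (O ⊕ (I ⊕ Unit)))) → ℚ :=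
    Sum.elim (fun _ => 0) (Sum.elim (fun _ => -1)
      (Sum.elim (fun _ => 0) (Sum.elim (fun _ => 1) (fun _ => 0)))) with hcdef
  rcases farkas a c with ⟨z, hz⟩ | ⟨l, hl0, hla, hlc⟩
  · set x : I → ℚ := fun i => z (.inl i) with hxdef
    set y : O → ℚ := fun B => z (.inr B) with hydef
    have hsum : ∀ k, ∑ v, a k v * z v =
        ∑ i, a k (.inl i) * x i + ∑ B, a k (.inr B) * y B := fun k =>
      Fintype.sum_sum_type _
    have hx0 : ∀ i, 0 ≤ x i := by
      intro i0
      have h := hz (.inl i0)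
      rw [hsum] at h
      simp only [hadef, hcdef, Sum.elim_inl, Sum.elim_inr, zero_mul,
        Finset.sum_const_zero, add_zero] at h
      rw [sum_ite_mul i0 (-1) x] at h
      linarith
    have hxB : ∀ B, 1 ≤ ∑ i, (if M B i then x i else 0) := by
      intro B0
      have h := hz (.inr (.inl B0))
      rw [hsum] at h
      simp only [hadef, hcdef, Sum.elim_inl, Sum.elim_inr, zero_mul,
        Finset.sum_const_zero, add_zero] at h
      rw [sum_ite_ind (M B0) (-1) x] at h
      linarith
    have hy0 : ∀ B, 0 ≤ y B := by
      intro B0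
      have h := hz (.inr (.inr (.inl B0)))
      rw [hsum] at h
      simp only [hadef, hcdef, Sum.elim_inl, Sum.elim_inr, zero_mul,
        Finset.sum_const_zero, zero_add] at h
      rw [sum_ite_mul B0 (-1) y] at h
      linarith
    have hyI : ∀ i, (∑ B, (if M B i then y B else 0)) ≤ 1 := by
      intro i0
      have h := hz (.inr (.inr (.inr (.inl i0))))
      rw [hsum] at h
      simp only [hadef, hcdef, Sum.elim_inl, Sum.elim_inr, zero_mul,
        Finset.sum_const_zero, zero_add] at h
      rw [sum_ite_ind (fun B => M B i0) 1 y] at h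
      linarith
    have hxy : ∑ i, x i ≤ ∑ B, y B := by
      have h := hz (.inr (.inr (.inr (.inr ()))))
      rw [hsum] at h
      simp only [hadef, hcdef, Sum.elim_inl, Sum.elim_inr, one_mul, neg_one_mul,
        Finset.sum_neg_distrib] at h
      linarith [h]
    exact ⟨x, y, hx0, hxB, hy0, hyI,
      le_antisymm hxy (weak_duality M x y hx0 hxB hy0 hyI)⟩
  · exfalso
    set p : I → ℚ := fun i => l (.inl i) with hpdef
    set lam : O → ℚ := fun B => l (.inr (.inl B)) with hlamdef
    set r : O → ℚ := fun B => l (.inr (.inr (.inl B))) with hrdef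
    set mu : I → ℚ := fun i => l (.inr (.inr (.inr (.inl i)))) with hmudef
    set nu : ℚ := l (.inr (.inr (.inr (.inr ())))) with hnudef
    have hsplit : ∀ g : (I ⊕ (O ⊕ (O ⊕ (I ⊕ Unit)))) → ℚ,
        ∑ k, l k * g k = ∑ i, p i * g (.inl i) + (∑ B, lam B * g (.inr (.inl B)) +
          (∑ B, r B * g (.inr (.inr (.inl B))) +
            (∑ i, mu i * g (.inr (.inr (.inr (.inl i)))) +
              nu * g (.inr (.inr (.inr (.inr ()))))))) := by
      intro g
      rw [Fintype.sum_sum_type, Fintype.sum_sum_type, Fintype.sum_sum_type,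
        Fintype.sum_sum_type]
      simp
      rfl
    have hnu0 : 0 ≤ nu := hl0 _
    have heqI : ∀ i0, ∑ B, (if M B i0 then lam B else 0) = nu - p i0 := by
      intro i0
      have h := hla (.inl i0)
      rw [hsplit] at h
      simp only [hadef, Sum.elim_inl, Sum.elim_inr, mul_zero, mul_one,
        Finset.sum_const_zero, add_zero, zero_add] at h
      rw [show ∑ i, p i * (if i0 = i then (-1:ℚ) else 0) = -p i0 from ?_,
        show ∑ B, lam B * (if M B i0 then (-1:ℚ) else 0)
          = -∑ B, (if M B i0 then lam B else 0) from ?_] at h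
      · linarith
      · rw [← Finset.sum_neg_distrib]
        exact Finset.sum_congr rfl fun B _ => by split <;> ring
      · rw [Finset.sum_eq_single i0]
        · simp
        · intro b _ hb
          rw [if_neg (Ne.symm hb), mul_zero]
        · intro hb
          exact absurd (Finset.mem_univ i0) hb
    have heqO : ∀ B0, ∑ i, (if M B0 i then mu i else 0) = nu + r B0 := by
      intro B0
      have h := hla (.inr B0)
      rw [hsplit] at h
      simp only [hadef, Sum.elim_inl, Sum.elim_inr, mul_zero, mul_one, mul_neg_one,
        Finset.sum_const_zero, add_zero, zero_add] at h
      rw [show ∑ B, r B * (if B0 = B then (-1:ℚ) else 0) = -r B0 from ?_,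
        show ∑ i, mu i * (if M B0 i then (1:ℚ) else 0)
          = ∑ i, (if M B0 i then mu i else 0) from ?_] at h
      · linarith
      · exact Finset.sum_congr rfl fun i _ => by split <;> ring
      · rw [Finset.sum_eq_single B0]
        · simp
        · intro b _ hb
          rw [if_neg (Ne.symm hb), mul_zero]
        · intro hb
          exact absurd (Finset.mem_univ B0) hb
    have hcost : ∑ i, mu i < ∑ B, lam B := by
      have h := hlc
      rw [hsplit] at h
      simp only [hcdef, Sum.elim_inl, Sum.elim_inr, mul_zero, mul_one, mul_neg_one,
        Finset.sum_const_zero, add_zero, zero_add, Finset.sum_neg_distrib] at h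
      linarith
    have hlam0 : ∀ B, 0 ≤ lam B := fun B => hl0 _
    have hmu0 : ∀ i, 0 ≤ mu i := fun i => hl0 _
    rcases eq_or_lt_of_le hnu0 with hnu | hnu
    · -- nu = 0 : all lam vanish
      have hlam : ∀ B, lam B = 0 := by
        intro B0
        obtain ⟨i0, hi0⟩ := hne B0
        have h1 : lam B0 ≤ ∑ B, (if M B i0 then lam B else 0) := by
          have := Finset.single_le_sum (f := fun B => if M B i0 then lam B else 0)
            (fun B _ => show (0:ℚ) ≤ if M B i0 then lam B else 0 by
              split_ifs; exacts [hlam0 B, le_rfl]) (Finset.mem_univ B0)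
          simpa [hi0] using this
        have h2 := heqI i0
        have h3 := hl0 (.inl i0)
        rw [← hnu] at h2
        have := hlam0 B0
        linarith [h1, h2, h3]
      have : ∑ B, lam B = 0 := Finset.sum_eq_zero fun B _ => hlam B
      have : 0 ≤ ∑ i, mu i := Finset.sum_nonneg fun i _ => hmu0 i
      linarith [hcost]
    · -- nu > 0
      have hchain : nu * ∑ B, lam B ≤ nu * ∑ i, mu i := by
        calc nu * ∑ B, lam B = ∑ B, lam B * nu := by
              rw [Finset.mul_sum]; exact Finset.sum_congr rfl fun B _ => mul_comm _ _
          _ ≤ ∑ B, lam B * ∑ i, (if M B i then mu i else 0) :=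
            Finset.sum_le_sum fun B _ => mul_le_mul_of_nonneg_left
              (by rw [heqO B]; linarith [hl0 (.inr (.inr (.inl B)))]) (hlam0 B)
          _ = ∑ i, mu i * ∑ B, (if M B i then lam B else 0) := sum_exchange M lam mu
          _ ≤ ∑ i, mu i * nu := Finset.sum_le_sum fun i _ =>
              mul_le_mul_of_nonneg_left (by rw [heqI i]; linarith [hl0 (.inl i)]) (hmu0 i)
          _ = nu * ∑ i, mu i := by
              rw [Finset.mul_sum]; exact Finset.sum_congr rfl fun i _ => mul_comm _ _
      have := (mul_le_mul_iff_right₀ hnu).mp hchain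
      linarith [hcost]

end FarkasAux


theorem subset_sSpan {X : Type} (S : SpanoidOn X) (T : Set X) : T ⊆ sSpan S T :=
  fun x hx => Set.mem_sInter.2 fun _ hT' => hT'.1 hx

theorem sSpan_ruleClosed {X : Type} (S : SpanoidOn X) (T : Set X) {p} (hp : p ∈ S)
    (hsub : p.1 ⊆ sSpan S T) : p.2 ∈ sSpan S T :=
  Set.mem_sInter.2 fun T' hT' => hT'.2 p hp fun x hx =>
    Set.mem_sInter.1 (hsub hx) T' hT'

theorem sSpan_subset {X : Type} (S : SpanoidOn X) {T T' : Set X} (h1 : T ⊆ T')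
    (h2 : ∀ p ∈ S, p.1 ⊆ T' → p.2 ∈ T') : sSpan S T ⊆ T' :=
  Set.sInter_subset_of_mem ⟨h1, h2⟩

theorem mem_sSpan_of_rule {X : Type} {S : SpanoidOn X} {p} (hp : p ∈ S) :
    p.2 ∈ sSpan S p.1 :=
  sSpan_ruleClosed S p.1 hp (subset_sSpan S p.1)

theorem sOpen_inter_nonempty {X : Type} {S : SpanoidOn X} {B : Set X} (hB : sOpen S B)
    {A : Set X} {i : X} (hi : i ∈ sSpan S A) (hiB : i ∈ B) : ∃ a ∈ A, a ∈ B := by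
  by_contra hcon
  push_neg at hcon
  have hsubc : A ⊆ Bᶜ := fun a ha => hcon a ha
  have hclosed : ∀ p ∈ S, p.1 ⊆ Bᶜ → p.2 ∈ Bᶜ := by
    intro p hp hsub
    have h2 : p.2 ∈ sSpan S Bᶜ :=
      sSpan_ruleClosed S Bᶜ hp (hsub.trans (subset_sSpan S Bᶜ))
    rwa [hB] at h2
  exact sSpan_subset S hsubc hclosed hi hiB

open Classical in
theorem code_exists {n : ℕ} (S : SpanoidOn (Fin n)) (O : Type) [Fintype O]
    (Bs : O → Set (Fin n)) (hO : ∀ B, (Bs B).Nonempty ∧ sOpen S (Bs B))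
    (s : O → ℕ) (N : ℕ)
    (hcol : ∀ i, (∑ B, if i ∈ Bs B then s B else 0) ≤ N) :
    ∃ C : Set (Fin n → Fin (2 ^ N)), sConsistent S C ∧ Nat.card C = 2 ^ (∑ B, s B) := by
  classical
  set Slot := Σ B : O, Fin (s B) with hSlot
  -- slots relevant to a coordinate i
  set SAt : Fin n → Type := fun i => {t : Slot // i ∈ Bs t.1} with hSAt
  have hcard : ∀ i, Fintype.card (SAt i) ≤ N := by
    intro i
    have e : SAt i ≃ Σ B : {B : O // i ∈ Bs B}, Fin (s B.1) :=
      { toFun := fun t => ⟨⟨t.1.1, t.2⟩, t.1.2⟩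
        invFun := fun u => ⟨⟨u.1.1, u.2⟩, u.1.2⟩
        left_inv := fun t => rfl
        right_inv := fun u => rfl }
    rw [Fintype.card_congr e, Fintype.card_sigma]
    simp only [Fintype.card_fin]
    have h1 : ∑ x : {B : O // i ∈ Bs B}, s x.1
        = ∑ B ∈ Finset.univ.filter (fun B => i ∈ Bs B), s B :=
      (Finset.sum_subtype _ (by simp) s).symm
    rw [h1, Finset.sum_filter]
    exact hcol i
  have hemb : ∀ i, SAt i ↪ Fin N := fun i =>
    Classical.choice (Function.Embedding.nonempty_of_card_le (by simpa using hcard i))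
  set ρ : ∀ i, SAt i ↪ Fin N := hemb with hρ
  set e2 : (Fin N → Fin 2) ≃ Fin (2 ^ N) := finFunctionFinEquiv with he2
  set vec : (Slot → Fin 2) → ∀ _ : Fin n, Fin N → Fin 2 := fun w i j =>
    if h : ∃ t : SAt i, ρ i t = j then w (Classical.choose h).1 else 0 with hvec
  set E : (Slot → Fin 2) → (Fin n → Fin (2 ^ N)) := fun w i => e2 (vec w i) with hE
  have hread : ∀ w i (t : SAt i), vec w i (ρ i t) = w t.1 := by
    intro w i t
    have h : ∃ t' : SAt i, ρ i t' = ρ i t := ⟨t, rfl⟩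
    have hch : Classical.choose h = t := (ρ i).injective (Classical.choose_spec h)
    calc vec w i (ρ i t) = w (Classical.choose h).1 := dif_pos h
      _ = w t.1 := by rw [hch]
  have hEinj : Function.Injective E := by
    intro w w' hww
    funext t
    obtain ⟨i, hi⟩ := (hO t.1).1
    have h1 : vec w i = vec w' i := e2.injective (congrFun hww i)
    have h2 := congrFun h1 (ρ i ⟨t, hi⟩)
    rwa [hread w i ⟨t, hi⟩, hread w' i ⟨t, hi⟩] at h2
  refine ⟨Set.range E, ?_, ?_⟩
  · -- consistency
    rintro ⟨A, i0⟩ hp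
    have hi0span : i0 ∈ sSpan S A := mem_sSpan_of_rule hp
    have hmeet : ∀ t : SAt i0, ∃ a, a ∈ A ∧ a ∈ Bs t.1.1 := by
      intro t
      obtain ⟨a, ha, hab⟩ := sOpen_inter_nonempty (hO t.1.1).2 hi0span t.2
      exact ⟨a, ha, hab⟩
    choose aa haA haB using hmeet
    refine ⟨fun v => e2 (fun j =>
      if h : ∃ t : SAt i0, ρ i0 t = j then
        (e2.symm (v ⟨aa (Classical.choose h), haA (Classical.choose h)⟩))
          ((ρ (aa (Classical.choose h)))
            ⟨(Classical.choose h).1, haB (Classical.choose h)⟩)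
      else 0), ?_⟩
    rintro c ⟨w, rfl⟩
    show e2 (vec w i0) = _
    congr 1
    funext j
    by_cases h : ∃ t : SAt i0, ρ i0 t = j
    · simp only [hvec]
      rw [dif_pos h, dif_pos h]
      set t := Classical.choose h with ht
      show w t.1 = _
      have : E w (aa t) = e2 (vec w (aa t)) := rfl
      rw [this, Equiv.symm_apply_apply]
      rw [hread w (aa t) ⟨t.1, haB t⟩]
    · simp only [hvec]
      rw [dif_neg h, dif_neg h]
  · -- cardinality
    calc Nat.card (Set.range E) = Fintype.card (Set.range E) := Nat.card_eq_fintype_card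
      _ = Fintype.card (Slot → Fin 2) := Set.card_range_of_injective hEinj
      _ = Fintype.card (Fin 2) ^ Fintype.card Slot := Fintype.card_fun
      _ = 2 ^ ∑ B : O, s B := by
          rw [Fintype.card_fin, Fintype.card_sigma]
          simp

/-- (a) any union set-representation of `S` by sets of size at most `ℓ` from a
universe `U` satisfies `|U|/ℓ ≤ LP^cover(S)` (so every code from such a representation has
dimension at most `LP^cover(S)`); (b) `f-rank(S) ≥ LP^cover(S)`, witnessed by a consistent
code of dimension exactly `LP^cover(S)`. -/
theorem LPcover_vs_set_representations {n : ℕ} (S : SpanoidOn (Fin n)) :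
    (∀ (U : Type) (_ : Fintype U) (Sets : Fin n → Set U) (ℓ : ℕ), 1 ≤ ℓ →
        (⋃ i, Sets i) = Set.univ →
        (∀ i, (Sets i).ncard ≤ ℓ) →
        (∀ (A : Set (Fin n)) (i : Fin n),
          i ∈ sSpan S A ↔ Sets i ⊆ ⋃ a ∈ A, Sets a) →
        (Fintype.card U : ℝ) / (ℓ : ℝ) ≤ sLPcover S) ∧
    sLPcover S ≤ sFrank S ∧
    (∃ m : ℕ, 2 ≤ m ∧ ∃ C : Set (Fin n → Fin m), sConsistent S C ∧
      Real.log (Nat.card C) / Real.log m = sLPcover S) := by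
  classical
  set Feas : Set ℝ := {y : ℝ | ∃ x : Fin n → ℝ, (∀ i, 0 ≤ x i) ∧
    (∀ B : Set (Fin n), B.Nonempty → sOpen S B → 1 ≤ ∑ i, B.indicator x i) ∧
    y = ∑ i, x i} with hFeas
  have hLP : sLPcover S = sInf Feas := rfl
  have hind : ∀ (x : Fin n → ℝ) (B : Set (Fin n)),
      ∑ i, B.indicator x i = ∑ i, if i ∈ B then x i else 0 :=
    fun x B => Finset.sum_congr rfl fun i _ => Set.indicator_apply B x i
  have hFne : Feas.Nonempty := by
    refine ⟨∑ i : Fin n, (1:ℝ), fun _ => 1, fun i => zero_le_one, ?_, rfl⟩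
    intro B hBne _
    obtain ⟨i0, hi0⟩ := hBne
    have h1 : B.indicator (fun _ => (1:ℝ)) i0 = 1 := Set.indicator_of_mem hi0 _
    have h2 := Finset.single_le_sum (f := fun i => B.indicator (fun _ => (1:ℝ)) i)
      (fun i _ => Set.indicator_nonneg (fun _ _ => zero_le_one) i) (Finset.mem_univ i0)
    simpa [h1] using h2
  have hFbdd : BddBelow Feas := by
    refine ⟨0, ?_⟩
    rintro z ⟨x, hx0, _, rfl⟩
    exact Finset.sum_nonneg fun i _ => hx0 i
  -- the finite family of nonempty open sets
  set O : Type := {B : Set (Fin n) // B.Nonempty ∧ sOpen S B} with hO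
  haveI : Fintype O := Fintype.ofFinite O
  set M : O → Fin n → Prop := fun B i => i ∈ B.1 with hM
  obtain ⟨x, y, hx0, hxB, hy0, hyI, hxy⟩ := covering_duality M (fun B => B.2.1)
  -- the LP value equals the common optimum
  have hval : sLPcover S = ∑ B : O, (y B : ℝ) := by
    rw [hLP]
    apply le_antisymm
    · have hcastsum : ∀ {κ : Type} (u : Finset κ) (P : κ → Prop) (inst : DecidablePred P)
          (f : κ → ℚ), ((∑ k ∈ u, if P k then f k else 0 : ℚ) : ℝ)
            = ∑ k ∈ u, if P k then (f k : ℝ) else 0 := by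
        intro κ u P inst f
        push_cast
        exact Finset.sum_congr rfl fun k _ => by split <;> simp
      have hmem : (∑ i, (x i : ℝ)) ∈ Feas := by
        refine ⟨fun i => (x i : ℝ), fun i => by show (0:ℝ) ≤ (x i:ℝ); exact_mod_cast hx0 i,
          ?_, rfl⟩
        intro B hBne hBopen
        rw [hind]
        have h := hxB ⟨B, hBne, hBopen⟩
        have h2 : (1:ℝ) ≤ ∑ i, if M ⟨B, hBne, hBopen⟩ i then (x i : ℝ) else 0 := by
          rw [← hcastsum]
          exact_mod_cast h
        exact h2
      have := csInf_le hFbdd hmem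
      calc sInf Feas ≤ ∑ i, (x i : ℝ) := this
        _ = ∑ B : O, (y B : ℝ) := by exact_mod_cast congrArg (Rat.cast : ℚ → ℝ) hxy
    · apply le_csInf hFne
      rintro z ⟨xr, hxr0, hxrB, rfl⟩
      have hcastsum : ∀ {κ : Type} (u : Finset κ) (P : κ → Prop) (inst : DecidablePred P)
          (f : κ → ℚ), ((∑ k ∈ u, if P k then f k else 0 : ℚ) : ℝ)
            = ∑ k ∈ u, if P k then (f k : ℝ) else 0 := by
        intro κ u P inst f
        push_cast
        exact Finset.sum_congr rfl fun k _ => by split <;> simp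
      refine weak_duality M xr (fun B => (y B : ℝ)) hxr0 ?_
        (fun B => by show (0:ℝ) ≤ (y B : ℝ); exact_mod_cast hy0 B) ?_
      · intro B
        have := hxrB B.1 B.2.1 B.2.2
        rw [hind] at this
        exact this
      · intro i
        have h : ((∑ B, if M B i then y B else 0 : ℚ) : ℝ) ≤ 1 := by exact_mod_cast hyI i
        rw [hcastsum] at h
        exact h
  refine ⟨?_, ?_⟩
  · -- part (a)
    intro U instU Sets ℓ hℓ hcover hsize hrep
    rw [hLP]
    apply le_csInf hFne
    rintro z ⟨xr, hxr0, hxrB, rfl⟩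
    have hBopen : ∀ u : U, sOpen S {i | u ∈ Sets i} := by
      intro u
      apply le_antisymm
      · apply sSpan_subset S (le_refl _)
        intro p hp hsub
        have hspan : p.2 ∈ sSpan S p.1 := mem_sSpan_of_rule hp
        have himg := (hrep p.1 p.2).mp hspan
        intro hmem
        simp only [Set.mem_compl_iff, Set.mem_setOf_eq] at hmem
        obtain ⟨V, ⟨a, rfl⟩, hV⟩ := himg hmem
        simp only [Set.mem_iUnion] at hV
        obtain ⟨ha, hua⟩ := hV
        exact hsub ha hua
      · exact subset_sSpan S _
    have hBne : ∀ u : U, ({i | u ∈ Sets i} : Set (Fin n)).Nonempty := by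
      intro u
      have : u ∈ ⋃ i, Sets i := by rw [hcover]; trivial
      obtain ⟨V, ⟨i, rfl⟩, hV⟩ := this
      exact ⟨i, hV⟩
    have key : ∀ u : U, (1:ℝ) ≤ ∑ i, if u ∈ Sets i then xr i else 0 := by
      intro u
      have h := hxrB {i | u ∈ Sets i} (hBne u) (hBopen u)
      rw [hind] at h
      simpa using h
    have h1 : (Fintype.card U : ℝ) ≤ ∑ u : U, ∑ i, if u ∈ Sets i then xr i else 0 := by
      calc (Fintype.card U : ℝ) = ∑ _u : U, (1:ℝ) := by simp
        _ ≤ _ := Finset.sum_le_sum fun u _ => key u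
    have h2 : ∑ u : U, ∑ i, (if u ∈ Sets i then xr i else 0)
        = ∑ i, ∑ u : U, (if u ∈ Sets i then xr i else 0) := Finset.sum_comm
    have h3 : ∀ i, ∑ u : U, (if u ∈ Sets i then xr i else 0) ≤ (ℓ:ℝ) * xr i := by
      intro i
      have hc : (Finset.univ.filter (fun u => u ∈ Sets i)).card ≤ ℓ := by
        have heq : (Finset.univ.filter (fun u => u ∈ Sets i)) = (Sets i).toFinset :=
          Set.filter_mem_univ_eq_toFinset _
        rw [heq, ← Set.ncard_eq_toFinset_card']
        exact hsize i
      calc ∑ u : U, (if u ∈ Sets i then xr i else 0)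
          = ∑ u ∈ Finset.univ.filter (fun u => u ∈ Sets i), xr i := (Finset.sum_filter _ _).symm
        _ = (Finset.univ.filter (fun u => u ∈ Sets i)).card • xr i := Finset.sum_const _
        _ = ((Finset.univ.filter (fun u => u ∈ Sets i)).card : ℝ) * xr i := nsmul_eq_mul _ _
        _ ≤ (ℓ:ℝ) * xr i := mul_le_mul_of_nonneg_right (by exact_mod_cast hc) (hxr0 i)
    have hfinal : (Fintype.card U : ℝ) ≤ (ℓ:ℝ) * ∑ i, xr i := by
      calc (Fintype.card U : ℝ) ≤ ∑ u : U, ∑ i, if u ∈ Sets i then xr i else 0 := h1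
        _ = ∑ i, ∑ u : U, (if u ∈ Sets i then xr i else 0) := h2
        _ ≤ ∑ i, (ℓ:ℝ) * xr i := Finset.sum_le_sum fun i _ => h3 i
        _ = (ℓ:ℝ) * ∑ i, xr i := by rw [Finset.mul_sum]
    have hl0 : (0:ℝ) < (ℓ:ℝ) := by exact_mod_cast hℓ
    rw [div_le_iff₀ hl0]
    calc (Fintype.card U : ℝ) ≤ (ℓ:ℝ) * ∑ i, xr i := hfinal
      _ = (∑ i, xr i) * (ℓ:ℝ) := mul_comm _ _
  · -- parts (b): code construction
    set N : ℕ := ∏ B : O, (y B).den with hNdef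
    have hNpos : 0 < N := Finset.prod_pos fun B _ => (y B).pos
    have hsnat : ∀ B : O, ∃ sB : ℕ, (sB:ℚ) = y B * N := by
      intro B
      obtain ⟨k, hk⟩ : (y B).den ∣ N := Finset.dvd_prod_of_mem _ (Finset.mem_univ B)
      refine ⟨(y B).num.toNat * k, ?_⟩
      have hnum : ((y B).num.toNat : ℤ) = (y B).num :=
        Int.toNat_of_nonneg (Rat.num_nonneg.mpr (hy0 B))
      have h1 : (((y B).num.toNat : ℕ) : ℚ) = ((y B).num : ℚ) := by exact_mod_cast hnum
      have hden0 : (((y B).den : ℕ) : ℚ) ≠ 0 := by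
        exact_mod_cast (y B).den_nz
      have h2 : y B * (((y B).den : ℕ) : ℚ) = ((y B).num : ℚ) := Rat.mul_den_eq_num _
      rw [hk]
      push_cast
      rw [h1, ← h2]
      ring
    choose sn hsn using hsnat
    have hcol : ∀ i, (∑ B : O, if i ∈ B.1 then sn B else 0) ≤ N := by
      intro i
      have hq : ((∑ B : O, if i ∈ B.1 then sn B else 0 : ℕ) : ℚ) ≤ (N:ℚ) := by
        push_cast
        have he : ∀ B : O, (if i ∈ B.1 then ((sn B : ℕ):ℚ) else 0)
            = (if M B i then y B else 0) * N := by
          intro B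
          by_cases hmem : i ∈ B.1
          · rw [if_pos hmem, if_pos hmem, hsn B]
          · rw [if_neg hmem, if_neg hmem, zero_mul]
        calc ∑ B : O, (if i ∈ B.1 then ((sn B : ℕ):ℚ) else 0)
            = ∑ B : O, (if M B i then y B else 0) * N := Finset.sum_congr rfl fun B _ => he B
          _ = (∑ B : O, if M B i then y B else 0) * N := (Finset.sum_mul _ _ _).symm
          _ ≤ 1 * N := by
              apply mul_le_mul_of_nonneg_right (hyI i) (by positivity)
          _ = (N:ℚ) := one_mul _
      exact_mod_cast hq
    obtain ⟨C, hCcons, hCcard⟩ := code_exists S O (fun B => B.1) (fun B => B.2) sn N hcol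
    set P : ℕ := ∑ B : O, sn B with hPdef
    have hPq : (P:ℚ) = (∑ B : O, y B) * N := by
      rw [hPdef]
      push_cast
      calc ∑ B : O, ((sn B : ℕ) : ℚ) = ∑ B : O, y B * N :=
            Finset.sum_congr rfl fun B _ => hsn B
        _ = (∑ B : O, y B) * N := (Finset.sum_mul _ _ _).symm
    have hNR : (0:ℝ) < (N:ℝ) := by exact_mod_cast hNpos
    have hlog2 : (0:ℝ) < Real.log 2 := Real.log_pos (by norm_num)
    have hdim : Real.log (Nat.card C) / Real.log ((2^N : ℕ) : ℝ) = sLPcover S := by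
      rw [hCcard, hval]
      rw [Nat.cast_pow, Nat.cast_pow]
      rw [Real.log_pow, Real.log_pow]
      have hPR : (P:ℝ) = (∑ B : O, (y B : ℝ)) * (N:ℝ) := by
        have := hPq
        have h2 : ((P:ℚ):ℝ) = (((∑ B : O, y B) * N : ℚ) : ℝ) := by exact_mod_cast this
        push_cast at h2
        exact_mod_cast h2
      rw [hPR]
      field_simp
    have h2N : 2 ≤ 2^N := by
      calc 2 = 2^1 := (pow_one 2).symm
        _ ≤ 2^N := Nat.pow_le_pow_right (by norm_num) hNpos
    have hfrankset : sLPcover S ∈ {d : ℝ | ∃ m : ℕ, 2 ≤ m ∧ ∃ C : Set (Fin n → Fin m),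
        sConsistent S C ∧ d = Real.log (Nat.card C) / Real.log m} :=
      ⟨2^N, h2N, C, hCcons, hdim.symm⟩
    have hbdd : BddAbove {d : ℝ | ∃ m : ℕ, 2 ≤ m ∧ ∃ C : Set (Fin n → Fin m),
        sConsistent S C ∧ d = Real.log (Nat.card C) / Real.log m} := by
      refine ⟨(n:ℝ), ?_⟩
      rintro d ⟨m, hm, C', hC', rfl⟩
      have hm1 : (1:ℝ) < (m:ℝ) := by exact_mod_cast hm
      have hlogm : 0 < Real.log m := Real.log_pos hm1
      have hcard : Nat.card C' ≤ m ^ n := by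
        have h1 : Nat.card C' ≤ Nat.card (Fin n → Fin m) :=
          Nat.card_le_card_of_injective _ Subtype.val_injective
        rwa [show Nat.card (Fin n → Fin m) = m ^ n from by
          rw [Nat.card_eq_fintype_card, Fintype.card_fun, Fintype.card_fin,
            Fintype.card_fin]] at h1
      have hlog : Real.log (Nat.card C') ≤ (n:ℝ) * Real.log m := by
        rcases Nat.eq_zero_or_pos (Nat.card C') with h0 | hpos
        · rw [h0]
          simp only [Nat.cast_zero, Real.log_zero]
          positivity
        · calc Real.log (Nat.card C') ≤ Real.log ((m:ℝ)^n) := by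
                apply Real.log_le_log (by exact_mod_cast hpos)
                exact_mod_cast hcard
            _ = (n:ℝ) * Real.log m := by rw [Real.log_pow]
      rw [div_le_iff₀ hlogm]
      exact hlog
    exact ⟨le_csSup hbdd hfrankset, 2^N, h2N, C, hCcons, hdim⟩
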